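/- Suppose b: ℝ^d → ℝ^d is continuous, a: ℝ^d × ℝ^d → ℝ^{d×d} is a continuous positive semidefinite covariance kernel (so the diagonal entries satisfy the Kunita–Watanabe inequality and A(x,y) := a(x,x) − a(x,y) − a(y,x) + a(y,y) satisfies the segment-subadditivity of its trace), and there exists K ≥ 0 such that 2⟨b(x)−b(y), x−y⟩ + tr A(x,y) ≤ K|x−y|² for all x,y ∈ ℝ^d. Then 2⟨b(x), x⟩ + tr a(x,x) ≤ K|x|² + O(|x|) as |x| → ∞; in particular there is a constant c > 0 such that 2⟨b(x),x⟩ + tr a(x,x) ≤ c·max(|x|², 1) for all x, i.e. the coercivity condition (G_ρ) holds with ρ a positive multiple of u ↦ max(u,1). -/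
import Mathlib
open scoped RealInnerProductSpace BigOperators
open Matrix

lemma inner_tEL_single {d : ℕ} (M : Matrix (Fin d) (Fin d) ℝ) (i : Fin d) :
    ⟪Matrix.toEuclideanLin M (EuclideanSpace.single i (1:ℝ)), EuclideanSpace.single i 1⟫ = M i i := by
  simp [Matrix.toEuclideanLin_apply, EuclideanSpace.inner_single_right, PiLp.inner_apply]

lemma psd_quad {d : ℕ}
    (a : EuclideanSpace ℝ (Fin d) → EuclideanSpace ℝ (Fin d) → Matrix (Fin d) (Fin d) ℝ)
    (ha_psd : ∀ (m : ℕ) (z : Fin m → EuclideanSpace ℝ (Fin d))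
      (v : Fin m → EuclideanSpace ℝ (Fin d)),
      0 ≤ ∑ j : Fin m, ∑ k : Fin m, ⟪Matrix.toEuclideanLin (a (z j) (z k)) (v k), v j⟫)
    (y z : EuclideanSpace ℝ (Fin d)) (t s : ℝ) (i : Fin d) :
    0 ≤ t^2 * (a y y) i i + t*s*((a y z) i i + (a z y) i i) + s^2 * (a z z) i i := by
  have h := ha_psd 2 ![y, z] ![t • EuclideanSpace.single i 1, s • EuclideanSpace.single i 1]
  simp only [Fin.sum_univ_two, Matrix.cons_val_zero, Matrix.cons_val_one, Matrix.head_cons,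
    _root_.map_smul, inner_smul_left, inner_smul_right, conj_trivial, smul_eq_mul,
    inner_tEL_single] at h
  nlinarith [h]

lemma kw_diag {d : ℕ}
    (a : EuclideanSpace ℝ (Fin d) → EuclideanSpace ℝ (Fin d) → Matrix (Fin d) (Fin d) ℝ)
    (ha_psd : ∀ (m : ℕ) (z : Fin m → EuclideanSpace ℝ (Fin d))
      (v : Fin m → EuclideanSpace ℝ (Fin d)),
      0 ≤ ∑ j : Fin m, ∑ k : Fin m, ⟪Matrix.toEuclideanLin (a (z j) (z k)) (v k), v j⟫)
    (y z : EuclideanSpace ℝ (Fin d)) (u : ℝ) (hu : 0 < u) :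
    (a y z).trace + (a z y).trace ≤ u * (a y y).trace + u⁻¹ * (a z z).trace := by
  have key : ∀ i : Fin d, (a y z) i i + (a z y) i i ≤ u * (a y y) i i + u⁻¹ * (a z z) i i := by
    intro i
    have h := psd_quad a ha_psd y z (Real.sqrt u) (-(Real.sqrt u)⁻¹) i
    have h1 : Real.sqrt u ^ 2 = u := Real.sq_sqrt hu.le
    have h2 : Real.sqrt u ≠ 0 := by positivity
    have h3 : Real.sqrt u * (-(Real.sqrt u)⁻¹) = -1 := by field_simp
    have h4 : (-(Real.sqrt u)⁻¹)^2 = u⁻¹ := by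
      rw [neg_pow, inv_pow, h1]; norm_num
    rw [h1, h3, h4] at h
    linarith
  simp only [Matrix.trace, Matrix.diag]
  rw [← Finset.sum_add_distrib]
  rw [Finset.mul_sum, Finset.mul_sum, ← Finset.sum_add_distrib]
  exact Finset.sum_le_sum fun i _ => key i

noncomputable def secondDiff {d : ℕ}
    (a : EuclideanSpace ℝ (Fin d) → EuclideanSpace ℝ (Fin d) → Matrix (Fin d) (Fin d) ℝ)
    (x y : EuclideanSpace ℝ (Fin d)) : Matrix (Fin d) (Fin d) ℝ :=
  a x x - a x y - a y x + a y y

set_option maxHeartbeats 1000000 in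
theorem coercivity_of_onesided {d : ℕ}
    (b : EuclideanSpace ℝ (Fin d) → EuclideanSpace ℝ (Fin d)) (hb : Continuous b)
    (a : EuclideanSpace ℝ (Fin d) → EuclideanSpace ℝ (Fin d) → Matrix (Fin d) (Fin d) ℝ)
    (ha_cont : Continuous fun p : EuclideanSpace ℝ (Fin d) × EuclideanSpace ℝ (Fin d) =>
      a p.1 p.2)
    (ha_symm : ∀ x y, (a x y)ᵀ = a y x)
    (ha_psd : ∀ (m : ℕ) (z : Fin m → EuclideanSpace ℝ (Fin d))
      (v : Fin m → EuclideanSpace ℝ (Fin d)),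
      0 ≤ ∑ j : Fin m, ∑ k : Fin m, ⟪Matrix.toEuclideanLin (a (z j) (z k)) (v k), v j⟫)
    (K : ℝ) (hK : 0 ≤ K)
    (hone : ∀ x y : EuclideanSpace ℝ (Fin d),
      2 * ⟪b x - b y, x - y⟫ + Matrix.trace (secondDiff a x y) ≤ K * ‖x - y‖ ^ 2) :
    ∃ c > (0 : ℝ), ∀ x : EuclideanSpace ℝ (Fin d),
      2 * ⟪b x, x⟫ + Matrix.trace (a x x) ≤ c * max (‖x‖ ^ 2) 1 := by
  classical
  have hφc : Continuous fun y : EuclideanSpace ℝ (Fin d) => 2 * ⟪b y, y⟫ + (a y y).trace := by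
    apply Continuous.add
    · exact continuous_const.mul (hb.inner continuous_id')
    · have h1 : Continuous fun y : EuclideanSpace ℝ (Fin d) => a y y :=
        ha_cont.comp (continuous_id.prodMk continuous_id)
      have : (fun y : EuclideanSpace ℝ (Fin d) => (a y y).trace) = fun y : EuclideanSpace ℝ (Fin d) => ∑ i, (a y y) i i := by
        funext y; rfl
      rw [this]
      exact continuous_finset_sum _ fun i _ =>
        (continuous_apply i).comp ((continuous_apply i).comp h1)
  obtain ⟨y₀, hy₀, hmax⟩ := (isCompact_closedBall (0:EuclideanSpace ℝ (Fin d)) 1).exists_isMaxOn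
    ⟨0, by simp⟩ hφc.continuousOn
  set C := max (2 * ⟪b y₀, y₀⟫ + (a y₀ y₀).trace) 0 with hCdef
  have hC0 : 0 ≤ C := le_max_right _ _
  refine ⟨K + C + 1, by linarith, ?_⟩
  intro x
  by_cases hx : ‖x‖ ≤ 1
  · have hx' : x ∈ Metric.closedBall (0:EuclideanSpace ℝ (Fin d)) 1 := by
      simpa [Metric.mem_closedBall, dist_eq_norm] using hx
    have h1 : 2 * ⟪b x, x⟫ + (a x x).trace ≤ C := le_trans (hmax hx') (le_max_left _ _)
    have hm : (1:ℝ) ≤ max (‖x‖^2) 1 := le_max_right _ _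
    nlinarith [h1, hm, hK, hC0]
  · push_neg at hx
    set s := ‖x‖ with hsdef
    have hs0 : (0:ℝ) < s := lt_trans one_pos hx
    set w := s⁻¹ • x with hwdef
    have hw : ‖w‖ = 1 := by
      rw [hwdef, norm_smul, Real.norm_eq_abs, abs_of_pos (inv_pos.mpr hs0), ← hsdef, inv_mul_cancel₀ hs0.ne']
    have hxw : x = s • w := by
      rw [hwdef, smul_smul, mul_inv_cancel₀ hs0.ne', one_smul]
    have hsinv : s⁻¹ < 1 := inv_lt_one_of_one_lt₀ hx
    set ε := 1 - s⁻¹ with hεdef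
    have hε : 0 < ε := by simp [hεdef]; linarith
    have hε1 : ε ≤ 1 := by
      have : 0 ≤ s⁻¹ := (inv_pos.mpr hs0).le
      simp [hεdef]; linarith
    have hxsub : x - w = ε • x := by
      rw [hεdef, sub_smul, one_smul, hwdef]
    have h1 := hone x w
    have htr : (secondDiff a x w).trace =
        (a x x).trace - (a x w).trace - (a w x).trace + (a w w).trace := by
      simp [secondDiff, Matrix.trace_add, Matrix.trace_sub]
    have hbwx : ⟪b w, x⟫ = s * ⟪b w, w⟫ := by
      conv_lhs => rw [hxw]
      rw [real_inner_smul_right]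
    have hinner : ⟪b x - b w, x - w⟫ = ε * (⟪b x, x⟫ - s * ⟪b w, w⟫) := by
      rw [hxsub, real_inner_smul_right, inner_sub_left, hbwx]
    have hnorm : ‖x - w‖ = s * ε := by
      rw [hxsub, norm_smul, Real.norm_eq_abs, abs_of_pos hε, ← hsdef, mul_comm]
    rw [hinner, htr, hnorm] at h1
    have qb := kw_diag a ha_psd w x s hs0
    -- main algebraic step
    set G := ⟪b x, x⟫
    set Hw := ⟪b w, w⟫
    set Tx := (a x x).trace
    set Tw := (a w w).trace
    set q1 := (a x w).trace
    set q2 := (a w x).trace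
    have e1 : ε * (K*s^2*ε + s*(2*Hw + Tw)) - ε * (2*G + Tx) =
        (K*(s*ε)^2 - (2*(ε*(G - s*Hw)) + (Tx - q1 - q2 + Tw)))
        + ((s*Tw + s⁻¹*Tx) - (q2 + q1)) := by
      rw [hεdef]
      field_simp
      ring
    have hwball : w ∈ Metric.closedBall (0:EuclideanSpace ℝ (Fin d)) 1 := by
      simp [Metric.mem_closedBall, dist_eq_norm, hw]
    have hφw : 2*Hw + Tw ≤ C := le_trans (hmax hwball) (le_max_left _ _)
    have hs2 : (1:ℝ) ≤ s^2 := by nlinarith [hx]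
    have hgoal : max (‖x‖^2) 1 = s^2 := by rw [← hsdef]; exact max_eq_left hs2
    rw [hgoal]
    show 2 * G + Tx ≤ (K + C + 1) * s ^ 2
    clear_value G Hw Tx Tw q1 q2 C
    clear hbwx hinner htr hφc hmax hy₀ hone ha_psd ha_cont ha_symm hb hwball hxsub hnorm
      hxw hw hwdef hgoal hCdef
    clear_value w ε s
    clear hsdef hεdef w x b a
    have key : ε * (2*G + Tx) ≤ ε * (K*s^2*ε + s*(2*Hw + Tw)) := by nlinarith [h1, qb, e1]
    have main : 2*G + Tx ≤ K*s^2*ε + s*(2*Hw + Tw) := le_of_mul_le_mul_left key hε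
    nlinarith [main, hφw, hC0, hK, hs0, hx, hε, hε1, hs2, sq_nonneg s,
      mul_le_mul_of_nonneg_left hφw hs0.le, mul_le_mul_of_nonneg_right hC0 hs0.le,
      mul_nonneg (mul_nonneg hK (sq_nonneg s)) (by linarith : (0:ℝ) ≤ 1 - ε),
      mul_le_mul_of_nonneg_right (by nlinarith : s ≤ s^2) hC0]
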